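/- For a = 1/2, with a_n = ∏_{k=1}^{n-1}(1+1/(2k))^{-1} (a_1 = 1) and v_n = ∑_{k=1}^n a_k^2, one has v_n ~ (π/4) log n as n → ∞, i.e. lim_{n→∞} v_n/((π/4) log n) = 1. -/

import Mathlib

open MeasureTheory ProbabilityTheory Filter Real Topology
open scoped ENNReal NNReal

/-- `aseq a n = ∏_{k=1}^{n-1} (1 + a/k)⁻¹`, the martingale normalizing sequence. -/
noncomputable def aseq (a : ℝ) (n : ℕ) : ℝ := ∏ k ∈ Finset.Icc 1 (n-1), (1 + a / k)⁻¹


noncomputable def Wal (n : ℕ) : ℝ :=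
  ∏ i ∈ Finset.range n, ((2 : ℝ) * i + 2) / (2 * i + 1) * ((2 * i + 2) / (2 * i + 3))

lemma aseq_succ_sq (n : ℕ) :
    (aseq (1/2) (n+1))^2 = Wal n / (2*n+1) := by
  induction n with
  | zero => simp [aseq, Wal]
  | succ n ih =>
    have h1 : aseq (1/2) (n+2) = aseq (1/2) (n+1) * (1 + (1/2 : ℝ) / (n+1))⁻¹ := by
      show (∏ k ∈ Finset.Icc 1 (n+1), (1 + (1/2:ℝ) / k)⁻¹) = _
      rw [Finset.prod_Icc_succ_top (Nat.succ_le_succ (Nat.zero_le n))]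
      simp only [aseq, Nat.add_sub_cancel]
      push_cast; ring_nf
    have h2 : (1 + (1/2 : ℝ) / (n+1))⁻¹ = (2*n+2) / (2*n+3) := by
      rw [inv_eq_iff_eq_inv]
      rw [eq_comm, inv_eq_iff_eq_inv, eq_comm]
      have : ((n:ℝ)+1) ≠ 0 := by positivity
      field_simp
      ring
    have h3 : Wal (n+1) = Wal n * (((2 : ℝ) * n + 2) / (2 * n + 1) * ((2 * n + 2) / (2 * n + 3))) := by
      simp [Wal, Finset.prod_range_succ]
    rw [h1, mul_pow, ih, h2, h3]
    have p1 : (2*(n:ℝ)+1) ≠ 0 := by positivity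
    have p3 : (2*(n:ℝ)+3) ≠ 0 := by positivity
    push_cast
    field_simp
    ring

lemma tendsto_mul_aseq_sq :
    Tendsto (fun n : ℕ => ((n:ℝ)+1) * (aseq (1/2) (n+1))^2) atTop (𝓝 (π/4)) := by
  have h1 : Tendsto Wal atTop (𝓝 (π/2)) := Real.tendsto_prod_pi_div_two
  have h2 : Tendsto (fun n : ℕ => ((n:ℝ)+1)/(2*n+1)) atTop (𝓝 (1/2)) := by
    have hn : Tendsto (fun n : ℕ => ((n:ℝ))⁻¹) atTop (𝓝 0) :=
      tendsto_inv_atTop_nhds_zero_nat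
    have ha : Tendsto (fun n : ℕ => (1:ℝ) + (n:ℝ)⁻¹) atTop (𝓝 (1 + 0)) :=
      tendsto_const_nhds.add hn
    have hb : Tendsto (fun n : ℕ => (2:ℝ) + (n:ℝ)⁻¹) atTop (𝓝 (2 + 0)) :=
      tendsto_const_nhds.add hn
    have h := ha.div hb (by norm_num : (2:ℝ) + 0 ≠ 0)
    norm_num at h
    apply h.congr'
    filter_upwards [eventually_ge_atTop 1] with n hn1
    have hne : ((n:ℝ)) ≠ 0 := by positivity
    rw [Pi.div_apply]
    field_simp
  have := h1.mul h2
  have hpi : π/2 * (1/2) = π/4 := by ring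
  rw [hpi] at this
  apply this.congr
  intro n
  rw [aseq_succ_sq]
  have : (2*(n:ℝ)+1) ≠ 0 := by positivity
  field_simp

theorem stmt5 :
    Tendsto (fun n : ℕ => (∑ k ∈ Finset.Icc 1 n, (aseq (1/2) k)^2) /
      ((Real.pi / 4) * Real.log n)) atTop (𝓝 1) := by
  set f : ℕ → ℝ := fun i => (aseq (1/2) (i+1))^2 with hf
  set g : ℕ → ℝ := fun i => ((i:ℝ)+1)⁻¹ with hg
  set S : ℕ → ℝ := fun n => ∑ i ∈ Finset.range n, f i with hS
  set H : ℕ → ℝ := fun n => ∑ i ∈ Finset.range n, g i with hH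
  set L : ℕ → ℝ := fun n => Real.log n with hL
  -- sum over Icc equals S
  have hIcc : ∀ n, (∑ k ∈ Finset.Icc 1 n, (aseq (1/2) k)^2) = S n := by
    intro n
    rw [hS, ← Finset.Ico_add_one_right_eq_Icc, Finset.sum_Ico_eq_sum_range]
    simp only [Nat.add_sub_cancel]
    exact Finset.sum_congr rfl fun i _ => by rw [hf, add_comm 1 i]
  -- harmonic = H
  have hHarm : ∀ n, ((harmonic n : ℝ)) = H n := by
    intro n; rw [harmonic]; push_cast; rfl
  have hHlog : Tendsto (fun n : ℕ => H n - L n) atTop (𝓝 eulerMascheroniConstant) := by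
    apply Real.tendsto_harmonic_sub_log.congr
    intro n; rw [hHarm]
  have hLtop : Tendsto L atTop atTop :=
    Real.tendsto_log_atTop.comp tendsto_natCast_atTop_atTop
  have hHtop : Tendsto H atTop atTop := by
    have := hLtop.atTop_add hHlog  -- L + (H - L) → atTop
    apply this.congr; intro n; ring
  -- (H - L) = o(L)
  have hHL : (fun n => H n - L n) =o[atTop] L :=
    (hHlog.isBigO_one ℝ).trans_isLittleO
      (Asymptotics.isLittleO_const_left.2 (Or.inr (tendsto_norm_atTop_atTop.comp hLtop)))
  -- f - (π/4) g = o(g)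
  have hfg : (fun i => f i - (π/4) * g i) =o[atTop] g := by
    rw [Asymptotics.isLittleO_iff_tendsto (fun i hi => absurd hi (by positivity))]
    have := tendsto_mul_aseq_sq.sub (tendsto_const_nhds (x := π/4))
    rw [sub_self] at this
    apply this.congr
    intro i
    have : ((i:ℝ)+1) ≠ 0 := by positivity
    simp only [hf, hg]
    field_simp [hf, hg]
  have hsum : (fun n => S n - (π/4) * H n) =o[atTop] H := by
    have := hfg.sum_range (fun i => by positivity) (by
      apply hHtop.congr; intro n; rfl)
    apply this.congr (fun n => by simp [hS, hH, Finset.sum_sub_distrib, Finset.mul_sum]) (fun n => rfl)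
  -- H =O L
  have hHO : H =O[atTop] L := by
    have : (fun n => (H n - L n) + L n) =O[atTop] L := (hHL.isBigO.add (Asymptotics.isBigO_refl _ _))
    apply this.congr (fun n => by ring) (fun n => rfl)
  -- S - (π/4) L = o(L)
  have hkey : (fun n => S n - (π/4) * L n) =o[atTop] L := by
    have h1 : (fun n => S n - (π/4) * H n) =o[atTop] L := hsum.trans_isBigO hHO
    have h2 : (fun n => (π/4) * (H n - L n)) =o[atTop] L := hHL.const_mul_left _
    have := h1.add h2
    apply this.congr (fun n => by ring) (fun n => rfl)
  -- conclude
  have hne : ∀ᶠ n : ℕ in atTop, (π/4) * L n ≠ 0 := by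
    filter_upwards [eventually_ge_atTop 2] with n hn
    have : (0:ℝ) < Real.log n := Real.log_pos (by exact_mod_cast Nat.one_lt_cast.mpr hn)
    positivity
  have hequiv : Asymptotics.IsEquivalent atTop S (fun n => (π/4) * L n) := by
    rw [Asymptotics.IsEquivalent]
    exact hkey.const_mul_right (by positivity : (π/4 : ℝ) ≠ 0)
  have := (Asymptotics.isEquivalent_iff_tendsto_one hne).mp hequiv
  apply this.congr
  intro n
  simp only [Pi.div_apply]
  rw [hIcc n]
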